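/- For every real α > 1 and every natural number n ≥ 2, Σ_{i=2}^{n} [Γ(i−1)·Γ(n + 1 + 1/(α−1))] / [Γ(i + 1/(α−1))·Γ(n)] = −αn + (α·Γ((nα + α − n)/(α−1))) / (Γ((2α−1)/(α−1))·Γ(n)) + n − 1. -/

import Mathlib

open Real

lemma key_telescope (c : ℝ) (hc : 0 < c) (n : ℕ) (hn : 2 ≤ n) :
    ∑ i ∈ Finset.Icc 2 n, Real.Gamma ((i : ℝ) - 1) / Real.Gamma ((i : ℝ) + c)
      = (1 / Real.Gamma (1 + c) - Real.Gamma n / Real.Gamma ((n : ℝ) + c)) / c := by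
  induction n with
  | zero => omega
  | succ m ih =>
    have hΓ1 : Real.Gamma (1 + c) ≠ 0 := (Real.Gamma_pos_of_pos (by linarith)).ne'
    rcases Nat.lt_or_ge m 2 with h | h
    · interval_cases m
      · omega
      · -- n = 2
        have h2 : Real.Gamma (2 + c) = (1 + c) * Real.Gamma (1 + c) := by
          have := Real.Gamma_add_one (show (1:ℝ)+c ≠ 0 by positivity)
          rw [show (1:ℝ) + c + 1 = 2 + c by ring] at this
          exact this
        simp only [show Finset.Icc 2 2 = {2} from rfl, Finset.sum_singleton]
        norm_num [Real.Gamma_one, Real.Gamma_two, h2]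
        have h1c : (1:ℝ) + c ≠ 0 := by positivity
        field_simp
        ring
    · have hm : (0:ℝ) < (m:ℝ) := by positivity
      have hmc : (0:ℝ) < (m:ℝ) + c := by linarith
      have hΓmc : Real.Gamma ((m:ℝ) + c) ≠ 0 := (Real.Gamma_pos_of_pos hmc).ne'
      have hΓm1c : Real.Gamma ((m:ℝ) + 1 + c) = ((m:ℝ) + c) * Real.Gamma ((m:ℝ) + c) := by
        have := Real.Gamma_add_one hmc.ne'
        rw [show (m:ℝ) + c + 1 = m + 1 + c by ring] at this
        exact this
      have hΓm1 : Real.Gamma ((m:ℝ) + 1) = (m:ℝ) * Real.Gamma m := by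
        have := Real.Gamma_add_one hm.ne'
        exact this
      rw [Finset.sum_Icc_succ_top (by omega : 2 ≤ m + 1), ih h]
      push_cast
      rw [hΓm1c, hΓm1]
      field_simp
      ring

theorem stmt4 (α : ℝ) (n : ℕ) (hα : 1 < α) (hn : 2 ≤ n) :
    ∑ i ∈ Finset.Icc 2 n,
        Real.Gamma ((i : ℝ) - 1) * Real.Gamma ((n : ℝ) + 1 + 1 / (α - 1)) /
          (Real.Gamma ((i : ℝ) + 1 / (α - 1)) * Real.Gamma n) =
      -α * n + α * Real.Gamma ((n * α + α - n) / (α - 1)) /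
          (Real.Gamma ((2 * α - 1) / (α - 1)) * Real.Gamma n) + n - 1 := by
  have hα1 : α - 1 ≠ 0 := by linarith
  set c : ℝ := 1 / (α - 1) with hcdef
  have hc : 0 < c := div_pos one_pos (by linarith)
  have hαc : α = 1 + 1 / c := by
    rw [hcdef]; field_simp; ring
  have e1 : ((n:ℝ) * α + α - n) / (α - 1) = (n : ℝ) + 1 + c := by
    rw [hcdef]; field_simp; ring
  have e2 : (2 * α - 1) / (α - 1) = 2 + c := by
    rw [hcdef]; field_simp; ring
  rw [e1, e2]
  have hn0 : (0:ℝ) < (n:ℝ) := by positivity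
  have hΓn : Real.Gamma (n:ℝ) ≠ 0 := (Real.Gamma_pos_of_pos hn0).ne'
  have hΓ1 : Real.Gamma (1 + c) ≠ 0 := (Real.Gamma_pos_of_pos (by linarith)).ne'
  have hnc : (0:ℝ) < (n:ℝ) + c := by linarith
  have hΓnc : Real.Gamma ((n:ℝ) + c) ≠ 0 := (Real.Gamma_pos_of_pos hnc).ne'
  have h2 : Real.Gamma (2 + c) = (1 + c) * Real.Gamma (1 + c) := by
    have := Real.Gamma_add_one (show (1:ℝ)+c ≠ 0 by positivity)
    rw [show (1:ℝ) + c + 1 = 2 + c by ring] at this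
    exact this
  have hΓn1c : Real.Gamma ((n:ℝ) + 1 + c) = ((n:ℝ) + c) * Real.Gamma ((n:ℝ) + c) := by
    have := Real.Gamma_add_one hnc.ne'
    rw [show (n:ℝ) + c + 1 = n + 1 + c by ring] at this
    exact this
  have hsum : (∑ i ∈ Finset.Icc 2 n,
        Real.Gamma ((i : ℝ) - 1) * Real.Gamma ((n : ℝ) + 1 + c) /
          (Real.Gamma ((i : ℝ) + c) * Real.Gamma n))
      = (Real.Gamma ((n:ℝ) + 1 + c) / Real.Gamma n) *
        ∑ i ∈ Finset.Icc 2 n, Real.Gamma ((i : ℝ) - 1) / Real.Gamma ((i : ℝ) + c) := by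
    rw [Finset.mul_sum]
    refine Finset.sum_congr rfl fun i _ => by ring
  rw [hsum, key_telescope c hc n hn, hΓn1c, h2, hαc]
  field_simp
  ring
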